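/- Generalized Andreief identity: let (X, Σ, μ) be a probability space, φ_1,...,φ_M, ψ_1,...,ψ_N ∈ L²(μ) with N ≥ M ≥ 1, and let A be an (N−M)×N real (or complex) matrix. Then the determinant of the N×N matrix whose top (N−M)×N block is A and whose bottom M×N block has entries ∫ φ_j(x)ψ_k(x)dμ(x) (for 1 ≤ j ≤ M, 1 ≤ k ≤ N) equals (1/M!) ∫_{X^M} det(of the N×N matrix with top block A and bottom block (ψ_k(x_j))_{j,k}) · det(φ_l(x_j))_{l,j=1}^M dμ(x_1)···dμ(x_M). -/

import Mathlib

open MeasureTheory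

/-- Stack a `K × (K+M)` matrix on top of an `M × (K+M)` matrix, giving a square
`(K+M) × (K+M)` matrix. -/
def stack {K M : ℕ} (A : Matrix (Fin K) (Fin (K + M)) ℝ)
    (B : Matrix (Fin M) (Fin (K + M)) ℝ) : Matrix (Fin (K + M)) (Fin (K + M)) ℝ :=
  Matrix.of fun i j => Sum.elim (fun a => A a j) (fun b => B b j) (finSumFinEquiv.symm i)

lemma det_stack {K M : ℕ} (A : Matrix (Fin K) (Fin (K + M)) ℝ)
    (B : Matrix (Fin M) (Fin (K + M)) ℝ) :
    (stack A B).det = ∑ τ : Equiv.Perm (Fin K ⊕ Fin M),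
      ((Equiv.Perm.sign τ : ℤ) : ℝ) *
        ((∏ a, A a (finSumFinEquiv (τ (Sum.inl a)))) *
          ∏ j, B j (finSumFinEquiv (τ (Sum.inr j)))) := by
  rw [← Matrix.det_submatrix_equiv_self finSumFinEquiv (stack A B), ← Matrix.det_transpose,
    Matrix.det_apply']
  refine Finset.sum_congr rfl fun τ _ => ?_
  rw [Fintype.prod_sum_type]
  simp [stack, Matrix.submatrix, mul_assoc]

lemma fubini_prod {X : Type*} [MeasurableSpace X] (μ : Measure X) [SigmaFinite μ] {M : ℕ}
    (g : Fin M → X → ℝ) :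
    ∫ x : Fin M → X, ∏ j, g j (x j) ∂(Measure.pi fun _ : Fin M => μ)
      = ∏ j, ∫ x, g j x ∂μ := by
  letI : MeasureSpace X := ⟨μ⟩
  exact MeasureTheory.integral_fintype_prod_eq_prod (μ := fun _ => μ) g

lemma int_prod {X : Type*} [MeasurableSpace X] (μ : Measure X) [SigmaFinite μ] {M : ℕ}
    (g : Fin M → X → ℝ) (hg : ∀ j, Integrable (g j) μ) :
    Integrable (fun x : Fin M → X => ∏ j, g j (x j)) (Measure.pi fun _ : Fin M => μ) := by
  letI : MeasureSpace X := ⟨μ⟩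
  exact Integrable.fintype_prod hg

/-- Generalized Andreief identity: for a probability measure `μ`, functions
`φ_1, ..., φ_M, ψ_1, ..., ψ_N ∈ L²(μ)` with `N = K + M ≥ M ≥ 1`, and a `K × N` matrix `A`,
the determinant of the `N × N` matrix whose top block is `A` and whose bottom block has
entries `∫ φ_j ψ_k dμ` equals
`(1/M!) ∫_{X^M} det(top block A, bottom block (ψ_k(x_j))) · det(φ_l(x_j)) dμ^M`. -/
theorem stmt19 {X : Type*} [MeasurableSpace X] (μ : Measure X) [IsProbabilityMeasure μ]
    (M K : ℕ) (hM : 1 ≤ M)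
    (φ : Fin M → X → ℝ) (ψ : Fin (K + M) → X → ℝ)
    (hφ : ∀ j, MemLp (φ j) 2 μ) (hψ : ∀ k, MemLp (ψ k) 2 μ)
    (A : Matrix (Fin K) (Fin (K + M)) ℝ) :
    (stack A (Matrix.of fun j k => ∫ x, φ j x * ψ k x ∂μ)).det
      = ((Nat.factorial M : ℝ))⁻¹ *
        ∫ x : Fin M → X,
          (stack A (Matrix.of fun j k => ψ k (x j))).det *
            (Matrix.of fun l j => φ l (x j)).det
          ∂(Measure.pi fun _ : Fin M => μ) := by
  classical
  set e : Fin K ⊕ Fin M ≃ Fin (K + M) := finSumFinEquiv with he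
  -- integrability of products of L² functions
  have hmul : ∀ (j : Fin M) (k : Fin (K + M)),
      Integrable (fun x => ψ k x * φ j x) μ := by
    intro j k
    have h := (hφ j).smul (hψ k) (p := 2) (q := 2) (r := 1) (hpqr := ⟨by simp [ENNReal.inv_two_add_inv_two]⟩)
    exact memLp_one_iff_integrable.mp h
  -- abbreviations
  set PA : Equiv.Perm (Fin K ⊕ Fin M) → ℝ :=
    fun τ => ∏ a, A a (e (τ (Sum.inl a))) with hPA
  -- pointwise expansion of the integrand
  have key : ∀ x : Fin M → X,
      (stack A (Matrix.of fun j k => ψ k (x j))).det *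
          (Matrix.of fun l j => φ l (x j)).det
        = ∑ τ : Equiv.Perm (Fin K ⊕ Fin M), ∑ σ : Equiv.Perm (Fin M),
            (((Equiv.Perm.sign τ : ℤ) : ℝ) * ((Equiv.Perm.sign σ : ℤ) : ℝ) * PA τ) *
              ∏ j, (ψ (e (τ (Sum.inr j))) (x j) * φ (σ j) (x j)) := by
    intro x
    rw [det_stack, Matrix.det_apply' (Matrix.of fun l j => φ l (x j)), Finset.sum_mul_sum]
    refine Finset.sum_congr rfl fun τ _ => Finset.sum_congr rfl fun σ _ => ?_
    rw [Finset.prod_mul_distrib]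
    simp only [Matrix.of_apply]
    ring
  have hint : ∀ (τ : Equiv.Perm (Fin K ⊕ Fin M)) (σ : Equiv.Perm (Fin M)),
      Integrable (fun x : Fin M → X =>
        (((Equiv.Perm.sign τ : ℤ) : ℝ) * ((Equiv.Perm.sign σ : ℤ) : ℝ) * PA τ) *
          ∏ j, (ψ (e (τ (Sum.inr j))) (x j) * φ (σ j) (x j)))
        (Measure.pi fun _ : Fin M => μ) := by
    intro τ σ
    exact (int_prod μ (fun j => fun y => ψ (e (τ (Sum.inr j))) y * φ (σ j) y)
      (fun j => hmul (σ j) (e (τ (Sum.inr j))))).const_mul _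
  -- compute the integral
  have hI : (∫ x : Fin M → X,
        (stack A (Matrix.of fun j k => ψ k (x j))).det *
          (Matrix.of fun l j => φ l (x j)).det
        ∂(Measure.pi fun _ : Fin M => μ))
      = ∑ τ : Equiv.Perm (Fin K ⊕ Fin M), ∑ σ : Equiv.Perm (Fin M),
          (((Equiv.Perm.sign τ : ℤ) : ℝ) * ((Equiv.Perm.sign σ : ℤ) : ℝ) * PA τ) *
            ∏ j, ∫ x, ψ (e (τ (Sum.inr j))) x * φ (σ j) x ∂μ := by
    rw [show (fun x : Fin M → X =>
        (stack A (Matrix.of fun j k => ψ k (x j))).det *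
          (Matrix.of fun l j => φ l (x j)).det) = _ from funext key]
    rw [integral_finset_sum _ (fun τ _ => integrable_finset_sum _ (fun σ _ => hint τ σ))]
    refine Finset.sum_congr rfl fun τ _ => ?_
    rw [integral_finset_sum _ (fun σ _ => hint τ σ)]
    refine Finset.sum_congr rfl fun σ _ => ?_
    rw [integral_const_mul, fubini_prod μ (fun j => fun y => ψ (e (τ (Sum.inr j))) y * φ (σ j) y)]
  -- the permutation symmetrization
  have hsym : (∑ τ : Equiv.Perm (Fin K ⊕ Fin M), ∑ σ : Equiv.Perm (Fin M),
          (((Equiv.Perm.sign τ : ℤ) : ℝ) * ((Equiv.Perm.sign σ : ℤ) : ℝ) * PA τ) *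
            ∏ j, ∫ x, ψ (e (τ (Sum.inr j))) x * φ (σ j) x ∂μ)
      = (Nat.factorial M : ℝ) *
        ∑ τ : Equiv.Perm (Fin K ⊕ Fin M),
          ((Equiv.Perm.sign τ : ℤ) : ℝ) *
            (PA τ * ∏ j, ∫ x, φ j x * ψ (e (τ (Sum.inr j))) x ∂μ) := by
    rw [Finset.sum_comm]
    have hσ : ∀ σ : Equiv.Perm (Fin M),
        (∑ τ : Equiv.Perm (Fin K ⊕ Fin M),
          (((Equiv.Perm.sign τ : ℤ) : ℝ) * ((Equiv.Perm.sign σ : ℤ) : ℝ) * PA τ) *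
            ∏ j, ∫ x, ψ (e (τ (Sum.inr j))) x * φ (σ j) x ∂μ)
        = ∑ τ : Equiv.Perm (Fin K ⊕ Fin M),
          ((Equiv.Perm.sign τ : ℤ) : ℝ) *
            (PA τ * ∏ j, ∫ x, φ j x * ψ (e (τ (Sum.inr j))) x ∂μ) := by
      intro σ
      set ρ : Equiv.Perm (Fin K ⊕ Fin M) := Equiv.sumCongr (1 : Equiv.Perm (Fin K)) σ⁻¹ with hρ
      refine Fintype.sum_equiv (Equiv.mulRight ρ) _ _ (fun τ => ?_)
      have h1 : ∀ a, (τ * ρ) (Sum.inl a) = τ (Sum.inl a) := by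
        intro a; simp [hρ, Equiv.Perm.mul_apply]
      have h2 : ∀ j, (τ * ρ) (Sum.inr j) = τ (Sum.inr (σ⁻¹ j)) := by
        intro j; simp [hρ, Equiv.Perm.mul_apply]
      have hsign : ((Equiv.Perm.sign (τ * ρ) : ℤ) : ℝ)
          = ((Equiv.Perm.sign τ : ℤ) : ℝ) * ((Equiv.Perm.sign σ : ℤ) : ℝ) := by
        rw [hρ, Equiv.Perm.sign_mul, Equiv.Perm.sign_sumCongr, map_one, one_mul,
          Equiv.Perm.sign_inv]
        push_cast
        ring
      have hPAeq : PA (τ * ρ) = PA τ := by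
        rw [hPA]; exact Finset.prod_congr rfl fun a _ => by rw [h1]
      have hprod : (∏ j, ∫ x, φ j x * ψ (e ((τ * ρ) (Sum.inr j))) x ∂μ)
          = ∏ j, ∫ x, ψ (e (τ (Sum.inr j))) x * φ (σ j) x ∂μ := by
        calc (∏ j, ∫ x, φ j x * ψ (e ((τ * ρ) (Sum.inr j))) x ∂μ)
            = ∏ j, (fun i => ∫ x, ψ (e (τ (Sum.inr i))) x * φ (σ i) x ∂μ) (σ⁻¹ j) := by
              refine Finset.prod_congr rfl fun j _ => ?_
              rw [h2]
              simp only [show σ (σ⁻¹ j) = j from σ.apply_symm_apply j]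
              exact integral_congr_ae (Filter.Eventually.of_forall fun x => mul_comm _ _)
          _ = ∏ i, ∫ x, ψ (e (τ (Sum.inr i))) x * φ (σ i) x ∂μ :=
              Equiv.prod_comp σ⁻¹ (fun i => ∫ x, ψ (e (τ (Sum.inr i))) x * φ (σ i) x ∂μ)
      simp only [Equiv.coe_mulRight]
      rw [hsign, hPAeq, hprod]
      ring
    rw [Finset.sum_congr rfl (fun σ _ => hσ σ), Finset.sum_const]
    simp [Fintype.card_perm, mul_comm]
  -- put everything together
  rw [hI, hsym, det_stack, ← mul_assoc, inv_mul_cancel₀ (by exact_mod_cast M.factorial_ne_zero),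
    one_mul]
  rfl
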